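/- arXiv:2512.24597 — 4 statements merged into one kernel-verified Lean document; each statement's English description precedes it below -/
import Mathlib

section
/- Let (X, R, I) and (Y, Q, J) be finite relation partitions, (f, σ) a morphism, and for each i ∈ I let A_i be the 0-1 adjacency matrix of R⁻¹({i}) and for j ∈ J let B_j be that of Q⁻¹({j}). For g : X → ℂ define f_*g : Y → ℂ by f_*g(y) = Σ_{x ∈ f⁻¹(y)} g(x). Then for all g, h : X → ℂ and all j ∈ J: (B_j f_*g, f_*h) = Σ_{i ∈ σ⁻¹(j)} (A_i g, h), where (u, v) = Σ_x u(x) conj(v(x)) is the standard Hermitian product and (A g)(x') = Σ_x A(x, x') g(x). -/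
open Finset

noncomputable section RelPart

/-- A relation partition `(X, R, I)` is unital with unit `i₀` if `R⁻¹({i₀})` is the diagonal. -/
def IsUnital {X I : Type*} (R : X × X → I) (i₀ : I) : Prop :=
  ∀ p : X × X, R p = i₀ ↔ p.1 = p.2

/-- A relation partition is regular if every relation class has constant out- and in-valency. -/
def IsRegularRP {X I : Type*} (R : X × X → I) : Prop :=
  ∀ i : I, ∃ k : ℕ, ∀ x : X,
    Nat.card {x' : X // R (x, x') = i} = k ∧ Nat.card {x' : X // R (x', x) = i} = k

/-- The cardinality `#R⁻¹({i})` of the `i`-th relation. -/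
def relCard {X I : Type*} (R : X × X → I) (i : I) : ℕ :=
  Nat.card {p : X × X // R p = i}

open scoped Classical in
/-- `(A_i g)(x') = Σ_x A_i(x, x') g(x)` for the adjacency matrix `A_i` of `R⁻¹({i})`. -/
def adjApply {X I : Type*} [Fintype X] (R : X × X → I) (i : I) (g : X → ℂ) : X → ℂ :=
  fun x' => ∑ x : X, if R (x, x') = i then g x else 0

/-- The standard Hermitian product `(u, w) = Σ_x u(x) conj(w(x))`. -/
def herm {X : Type*} [Fintype X] (u w : X → ℂ) : ℂ :=
  ∑ x : X, u x * (starRingEnd ℂ) (w x)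

/-- The `i`-th inner distribution `λ_i = v · (A_i g, g) / #R⁻¹({i})`. -/
def innerDist {X I : Type*} [Fintype X] (R : X × X → I) (i : I) (g : X → ℂ) : ℂ :=
  (Fintype.card X : ℂ) * herm (adjApply R i g) g / (relCard R i : ℂ)

/-- `g` is `(v, k, λ)`-equi-distributed: mass `k` and `λ_i = λ` for all `i ≠ i₀`. -/
def IsEquiDist {X I : Type*} [Fintype X] (R : X × X → I) (i₀ : I) (g : X → ℂ)
    (k lam : ℂ) : Prop :=
  (∑ x : X, g x) = k ∧ ∀ i : I, i ≠ i₀ → innerDist R i g = lam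

open scoped Classical in
/-- The pushout `f_*g(y) = Σ_{x ∈ f⁻¹(y)} g(x)`. -/
def pushf {X Y : Type*} [Fintype X] (f : X → Y) (g : X → ℂ) : Y → ℂ :=
  fun y => ∑ x : X, if f x = y then g x else 0

end RelPart

open scoped Classical in
/-- `(B_j f_*g, f_*h) = Σ_{i ∈ σ⁻¹(j)} (A_i g, h)`. -/
theorem pushout_adjacency {X I Y J : Type*} [Fintype X] [Fintype Y] [Fintype I]
    (R : X × X → I) (Q : Y × Y → J)
    (hR : Function.Surjective R) (hQ : Function.Surjective Q)
    (f : X → Y) (σ : I → J)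
    (hm : ∀ x x' : X, Q (f x, f x') = σ (R (x, x')))
    (g h : X → ℂ) (j : J) :
    herm (adjApply Q j (pushf f g)) (pushf f h)
      = ∑ i : I, if σ i = j then herm (adjApply R i g) h else 0 := by
  classical
  have key : herm (adjApply Q j (pushf f g)) (pushf f h)
      = ∑ x' : X, ∑ x : X, if σ (R (x, x')) = j then g x * (starRingEnd ℂ) (h x') else 0 := by
    simp only [herm, adjApply, pushf, map_sum, Finset.sum_mul, Finset.mul_sum,
      ite_mul, zero_mul, mul_ite, mul_zero, apply_ite (starRingEnd ℂ), map_zero]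
    rw [Finset.sum_comm]
    simp only [Finset.sum_ite_eq, Finset.mem_univ, if_true]
    refine Finset.sum_congr rfl fun x' _ => ?_
    have step : ∀ y : Y, (if Q (y, f x') = j then
          (∑ x : X, if f x = y then g x * (starRingEnd ℂ) (h x') else 0) else 0)
        = ∑ x : X, if f x = y then
            (if Q (y, f x') = j then g x * (starRingEnd ℂ) (h x') else 0) else 0 := by
      intro y; by_cases hq : Q (y, f x') = j <;> simp [hq]
    simp only [step]
    rw [Finset.sum_comm]
    refine Finset.sum_congr rfl fun x _ => ?_
    simp [Finset.sum_ite_eq', hm]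
  have rhs : (∑ i : I, if σ i = j then herm (adjApply R i g) h else 0)
      = ∑ x' : X, ∑ x : X, if σ (R (x, x')) = j then g x * (starRingEnd ℂ) (h x') else 0 := by
    simp only [herm, adjApply, Finset.sum_mul, ite_mul, zero_mul]
    have step : ∀ i : I, (if σ i = j then
          (∑ x' : X, ∑ x : X, if R (x, x') = i then g x * (starRingEnd ℂ) (h x') else 0) else 0)
        = ∑ x' : X, ∑ x : X, if R (x, x') = i then
            (if σ i = j then g x * (starRingEnd ℂ) (h x') else 0) else 0 := by
      intro i; by_cases hi : σ i = j <;> simp [hi]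
    simp only [step]
    rw [Finset.sum_comm]
    refine Finset.sum_congr rfl fun x' _ => ?_
    rw [Finset.sum_comm]
    refine Finset.sum_congr rfl fun x _ => ?_
    simp [Finset.sum_ite_eq]
  rw [key, rhs]
end

section
/- Let (f, σ) be a quotient morphism (i.e., f and σ are surjective) from a finite regular relation partition (X, R, I) to a finite unital relation partition (Y, Q, J). Then for every y ∈ Y, the fiber f⁻¹(y) has exactly #X / #Y elements. -/
open Finset

/-- fibers of a quotient morphism from a finite regular relation partition
to a finite unital relation partition all have `#X / #Y` elements. -/
theorem fiber_card {X I Y J : Type*} [Fintype X] [Fintype Y]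
    (R : X × X → I) (Q : Y × Y → J)
    (hR : Function.Surjective R) (hQ : Function.Surjective Q)
    (hreg : IsRegularRP R) (j₀ : J) (hQu : IsUnital Q j₀)
    (f : X → Y) (σ : I → J)
    (hm : ∀ x x' : X, Q (f x, f x') = σ (R (x, x')))
    (hf : Function.Surjective f) (hσ : Function.Surjective σ)
    (y : Y) :
    Nat.card {x : X // f x = y} = Fintype.card X / Fintype.card Y := by
  classical
  haveI : Fintype I := Fintype.ofSurjective R hR
  -- the fiber through any point has constant cardinality
  have hpred : ∀ x x' : X, (f x' = f x) ↔ σ (R (x, x')) = j₀ := by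
    intro x x'
    rw [← hm, hQu (f x, f x')]
    exact ⟨fun h => h.symm, fun h => h.symm⟩
  set T : Finset I := univ.filter (fun i => σ i = j₀) with hT
  set c : ℕ := ∑ i ∈ T, (hreg i).choose with hc
  have key : ∀ x : X, (univ.filter (fun x' => f x' = f x)).card = c := by
    intro x
    have h1 : (univ.filter (fun x' => f x' = f x))
        = (univ.filter (fun x' => σ (R (x, x')) = j₀)) := by
      ext x'; simp [hpred x x']
    rw [h1]
    have h2 : (univ.filter (fun x' : X => σ (R (x, x')) = j₀)).card
        = ∑ i ∈ T, ((univ.filter (fun x' : X => σ (R (x, x')) = j₀)).filter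
            (fun x' => R (x, x') = i)).card := by
      apply Finset.card_eq_sum_card_fiberwise (f := fun x' => R (x, x'))
      intro x' hx'
      simp only [hT, mem_filter, mem_univ, true_and] at hx' ⊢
      simpa using hx'
    rw [h2, hc]
    apply Finset.sum_congr rfl
    intro i hi
    simp only [hT, mem_filter, mem_univ, true_and] at hi
    have h3 : ((univ.filter (fun x' : X => σ (R (x, x')) = j₀)).filter
        (fun x' => R (x, x') = i)) = univ.filter (fun x' : X => R (x, x') = i) := by
      ext x'
      simp only [mem_filter, mem_univ, true_and]
      constructor
      · exact fun h => h.2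
      · intro h; exact ⟨by rw [h]; exact hi, h⟩
    rw [h3]
    have := ((hreg i).choose_spec x).1
    rwa [Nat.card_eq_fintype_card, Fintype.card_subtype] at this
  -- all fibers over Y have cardinality c
  have fib : ∀ y' : Y, (univ.filter (fun x => f x = y')).card = c := by
    intro y'
    obtain ⟨x₀, hx₀⟩ := hf y'
    rw [← hx₀]
    exact key x₀
  -- total count
  have htot : Fintype.card X = Fintype.card Y * c := by
    have := Finset.card_eq_sum_card_fiberwise (f := f) (s := (univ : Finset X))
      (t := (univ : Finset Y)) (fun x _ => mem_univ _)
    simp only [Finset.card_univ] at this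
    rw [this]
    rw [Finset.sum_congr rfl (fun y' _ => fib y')]
    simp [Finset.card_univ, mul_comm]
  have hY : 0 < Fintype.card Y := Fintype.card_pos_iff.mpr ⟨y⟩
  have : Nat.card {x : X // f x = y} = c := by
    rw [Nat.card_eq_fintype_card, Fintype.card_subtype]
    exact fib y
  rw [this, htot, Nat.mul_div_cancel_left _ hY]
end

section
/- Pushout preserves equi-distributed functions: let (X, R, I) be a finite unital regular relation partition, (Y, Q, J) a finite unital relation partition, and (f, σ) a quotient morphism (f, σ surjective). If g : X → ℂ is a (#X, k, λ)-equi-distributed function, then f_*g : Y → ℂ, f_*g(y) = Σ_{x ∈ f⁻¹(y)} g(x), is a (#Y, k, (#X/#Y)·λ)-equi-distributed function. -/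
open Finset

section Helpers
open scoped Classical

lemma herm_adj {X I : Type*} [Fintype X] (R : X × X → I) (i : I) (g : X → ℂ) :
    herm (adjApply R i g) g
      = ∑ p : X × X, if R p = i then g p.1 * (starRingEnd ℂ) (g p.2) else 0 := by
  unfold herm adjApply
  rw [Fintype.sum_prod_type, Finset.sum_comm]
  refine Finset.sum_congr rfl fun x' _ => ?_
  rw [Finset.sum_mul]
  refine Finset.sum_congr rfl fun x _ => ?_
  split <;> simp

lemma relCard_eq_filter {X I : Type*} [Fintype X] (R : X × X → I) (i : I) :
    relCard R i = (Finset.univ.filter (fun p : X × X => R p = i)).card := by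
  rw [relCard, Nat.card_eq_fintype_card, Fintype.card_subtype]

lemma herm_adj_push {X Y J : Type*} [Fintype X] [Fintype Y]
    (Q : Y × Y → J) (j : J) (f : X → Y) (g : X → ℂ) :
    herm (adjApply Q j (pushf f g)) (pushf f g)
      = ∑ p : X × X, if Q (f p.1, f p.2) = j then g p.1 * (starRingEnd ℂ) (g p.2) else 0 := by
  rw [herm_adj]
  have expand : ∀ q : Y × Y, pushf f g q.1 * (starRingEnd ℂ) (pushf f g q.2)
      = ∑ p : X × X, if (f p.1, f p.2) = q then g p.1 * (starRingEnd ℂ) (g p.2) else 0 := by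
    intro q
    unfold pushf
    rw [map_sum, Finset.sum_mul_sum, ← Fintype.sum_prod_type']
    refine Finset.sum_congr rfl fun p _ => ?_
    rw [apply_ite (starRingEnd ℂ), map_zero, ite_mul, mul_ite]
    by_cases h1 : f p.1 = q.1 <;> by_cases h2 : f p.2 = q.2 <;>
      simp [h1, h2, Prod.ext_iff]
  calc (∑ q : Y × Y, if Q q = j then pushf f g q.1 * (starRingEnd ℂ) (pushf f g q.2) else 0)
      = ∑ q : Y × Y, ∑ p : X × X, if (f p.1, f p.2) = q then
          (if Q q = j then g p.1 * (starRingEnd ℂ) (g p.2) else 0) else 0 := by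
        refine Finset.sum_congr rfl fun q _ => ?_
        split_ifs with h
        · rw [expand]
        · simp
    _ = ∑ p : X × X, ∑ q : Y × Y, if (f p.1, f p.2) = q then
          (if Q q = j then g p.1 * (starRingEnd ℂ) (g p.2) else 0) else 0 := Finset.sum_comm
    _ = ∑ p : X × X, if Q (f p.1, f p.2) = j then g p.1 * (starRingEnd ℂ) (g p.2) else 0 := by
        refine Finset.sum_congr rfl fun p _ => ?_
        rw [Finset.sum_ite_eq]
        simp

end Helpers

/-- pushout along a quotient morphism preserves equi-distributed functions,
with parameters `(#Y, k, (#X/#Y)·λ)`. -/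
theorem pushout_preserves_equidist {X I Y J : Type*} [Fintype X] [Fintype Y]
    (R : X × X → I) (Q : Y × Y → J)
    (hR : Function.Surjective R) (hQ : Function.Surjective Q)
    (i₀ : I) (hRu : IsUnital R i₀) (hreg : IsRegularRP R)
    (j₀ : J) (hQu : IsUnital Q j₀)
    (f : X → Y) (σ : I → J)
    (hm : ∀ x x' : X, Q (f x, f x') = σ (R (x, x')))
    (hf : Function.Surjective f) (hσ : Function.Surjective σ)
    (g : X → ℂ) (k lam : ℂ)
    (hg : IsEquiDist R i₀ g k lam) :
    IsEquiDist Q j₀ (pushf f g) k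
      (((Fintype.card X : ℂ) / (Fintype.card Y : ℂ)) * lam) := by
  classical
  obtain ⟨hmass, hlam⟩ := hg
  have hYne : Nonempty Y := by obtain ⟨q, -⟩ := hQ j₀; exact ⟨q.1⟩
  have hXne : Nonempty X := by
    obtain ⟨x, -⟩ := hf (Classical.arbitrary Y); exact ⟨x⟩
  letI : Fintype I := Fintype.ofSurjective R hR
  letI : Fintype J := Fintype.ofSurjective Q hQ
  have hσ0 : σ i₀ = j₀ := by
    obtain ⟨x⟩ := hXne
    have h1 : R (x, x) = i₀ := (hRu (x, x)).mpr rfl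
    have h2 : Q (f x, f x) = j₀ := (hQu (f x, f x)).mpr rfl
    rw [← h1, ← hm x x, h2]
  choose kdeg hdeg using hreg
  set K : ℕ := ∑ i : I, if σ i = j₀ then kdeg i else 0 with hK
  have fibconst : ∀ y : Y, (univ.filter (fun x => f x = y)).card = K := by
    intro y
    obtain ⟨x', rfl⟩ := hf y
    have fib_eq : (univ.filter (fun x => f x = f x'))
        = univ.filter (fun x => σ (R (x, x')) = j₀) := by
      ext x
      simp only [mem_filter, mem_univ, true_and]
      rw [← hm, hQu]
    rw [fib_eq]
    rw [Finset.card_eq_sum_card_fiberwise (f := fun x => R (x, x')) (t := univ)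
      (fun x _ => mem_univ _)]
    refine Finset.sum_congr rfl fun i _ => ?_
    by_cases hi : σ i = j₀
    · rw [if_pos hi]
      have he : (univ.filter (fun x => σ (R (x, x')) = j₀)).filter (fun x => R (x, x') = i)
          = univ.filter (fun x => R (x, x') = i) := by
        ext x
        simp only [mem_filter, mem_univ, true_and]
        exact ⟨fun h => h.2, fun h => ⟨h ▸ hi, h⟩⟩
      rw [he]
      have := (hdeg i x').2
      rwa [Nat.card_eq_fintype_card, Fintype.card_subtype] at this
    · rw [if_neg hi, Finset.card_eq_zero]
      ext x
      simp only [mem_filter, mem_univ, true_and, Finset.notMem_empty, iff_false, not_and]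
      intro h1 h2
      exact hi (h2 ▸ h1)
  have cardX : Fintype.card X = Fintype.card Y * K := by
    rw [← Finset.card_univ, Finset.card_eq_sum_card_fiberwise (f := f) (t := univ)
      (fun x _ => mem_univ _)]
    simp [fibconst, Finset.card_univ, mul_comm]
  have pairfib : ∀ j : J, (univ.filter (fun p : X × X => σ (R p) = j)).card
      = (univ.filter (fun q : Y × Y => Q q = j)).card * (K * K) := by
    intro j
    rw [Finset.card_eq_sum_card_fiberwise (f := fun p : X × X => (f p.1, f p.2))
      (t := univ.filter (fun q : Y × Y => Q q = j)) ?_]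
    · have hfib : ∀ q ∈ univ.filter (fun q : Y × Y => Q q = j),
          ((univ.filter (fun p : X × X => σ (R p) = j)).filter
            (fun p => (f p.1, f p.2) = q)).card = K * K := by
        intro q hq
        simp only [mem_filter, mem_univ, true_and] at hq
        have he : (univ.filter (fun p : X × X => σ (R p) = j)).filter
              (fun p => (f p.1, f p.2) = q)
            = (univ.filter (fun x => f x = q.1)) ×ˢ (univ.filter (fun x => f x = q.2)) := by
          ext p
          simp only [mem_filter, mem_univ, true_and, Finset.mem_product, Prod.ext_iff]
          constructor
          · rintro ⟨-, h1, h2⟩; exact ⟨h1, h2⟩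
          · rintro ⟨h1, h2⟩
            refine ⟨?_, h1, h2⟩
            have hc : Q (f p.1, f p.2) = j := by rw [h1, h2]; exact hq
            rw [hm] at hc
            exact hc
        rw [he, Finset.card_product, fibconst, fibconst]
      rw [Finset.sum_congr rfl hfib, Finset.sum_const, smul_eq_mul]
    · intro p hp
      simp only [mem_coe, mem_filter, mem_univ, true_and] at hp ⊢
      rw [hm]
      exact hp
  have relsum : ∀ j : J, (∑ i : I, if σ i = j then (relCard R i : ℕ) else 0)
      = (univ.filter (fun p : X × X => σ (R p) = j)).card := by
    intro j
    rw [Finset.card_eq_sum_card_fiberwise (f := R) (t := univ) (fun p _ => mem_univ _)]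
    refine Finset.sum_congr rfl fun i _ => ?_
    by_cases hi : σ i = j
    · rw [if_pos hi, relCard_eq_filter]
      congr 1
      ext p
      simp only [mem_filter, mem_univ, true_and]
      exact ⟨fun h => ⟨h ▸ hi, h⟩, fun h => h.2⟩
    · rw [if_neg hi]
      symm
      rw [Finset.card_eq_zero]
      ext p
      simp only [mem_filter, mem_univ, true_and, Finset.notMem_empty, iff_false, not_and]
      intro h1 h2
      exact hi (h2 ▸ h1)
  have hermsplit : ∀ j : J, herm (adjApply Q j (pushf f g)) (pushf f g)
      = ∑ i : I, if σ i = j then herm (adjApply R i g) g else 0 := by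
    intro j
    rw [herm_adj_push]
    have h2 : ∀ i : I, (if σ i = j then herm (adjApply R i g) g else 0)
        = ∑ p : X × X, if R p = i then
            (if σ i = j then g p.1 * (starRingEnd ℂ) (g p.2) else 0) else 0 := by
      intro i
      rw [herm_adj]
      split_ifs with h
      · rfl
      · simp
    rw [Finset.sum_congr rfl (fun i _ => h2 i), Finset.sum_comm]
    refine Finset.sum_congr rfl fun p _ => ?_
    rw [Finset.sum_ite_eq Finset.univ (R p)
      (fun i => if σ i = j then g p.1 * (starRingEnd ℂ) (g p.2) else 0), if_pos (mem_univ _)]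
    rw [hm p.1 p.2]
  -- nonvanishing facts
  have hX0 : (Fintype.card X : ℂ) ≠ 0 := Nat.cast_ne_zero.mpr Fintype.card_ne_zero
  have hY0 : (Fintype.card Y : ℂ) ≠ 0 := Nat.cast_ne_zero.mpr Fintype.card_ne_zero
  have hrelR : ∀ i : I, (relCard R i : ℂ) ≠ 0 := by
    intro i
    obtain ⟨p, hp⟩ := hR i
    have : Nonempty {p : X × X // R p = i} := ⟨⟨p, hp⟩⟩
    exact Nat.cast_ne_zero.mpr Nat.card_pos.ne'
  have hermval : ∀ i : I, i ≠ i₀ →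
      herm (adjApply R i g) g = lam * (relCard R i : ℂ) / (Fintype.card X : ℂ) := by
    intro i hi
    have h := hlam i hi
    rw [innerDist, div_eq_iff (hrelR i)] at h
    rw [eq_div_iff hX0, mul_comm]
    exact h
  constructor
  · rw [← hmass]
    unfold pushf
    rw [Finset.sum_comm]
    refine Finset.sum_congr rfl fun x _ => ?_
    rw [Finset.sum_ite_eq Finset.univ (f x) (fun _ => g x), if_pos (mem_univ _)]
  · intro j hj
    have hrelQ : (relCard Q j : ℂ) ≠ 0 := by
      obtain ⟨q, hq⟩ := hQ j
      have : Nonempty {q : Y × Y // Q q = j} := ⟨⟨q, hq⟩⟩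
      exact Nat.cast_ne_zero.mpr Nat.card_pos.ne'
    have hstep : (∑ i : I, if σ i = j then herm (adjApply R i g) g else 0)
        = (lam / (Fintype.card X : ℂ)) * ∑ i : I, (if σ i = j then (relCard R i : ℂ) else 0) := by
      rw [Finset.mul_sum]
      refine Finset.sum_congr rfl fun i _ => ?_
      split_ifs with h
      · rw [hermval i (fun hcon => hj (by rw [← h, hcon, hσ0]))]
        ring
      · simp
    have hcast : (∑ i : I, if σ i = j then (relCard R i : ℂ) else 0)
        = ((univ.filter (fun q : Y × Y => Q q = j)).card : ℂ) * (K * K) := by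
      have := relsum j
      rw [pairfib j] at this
      calc (∑ i : I, if σ i = j then (relCard R i : ℂ) else 0)
          = ((∑ i : I, if σ i = j then (relCard R i : ℕ) else 0 : ℕ) : ℂ) := by
            push_cast
            exact Finset.sum_congr rfl fun i _ => by split_ifs <;> simp
        _ = ((univ.filter (fun q : Y × Y => Q q = j)).card * (K * K) : ℕ) := by rw [this]
        _ = _ := by push_cast; ring
    have hrelQf : (relCard Q j : ℂ) = ((univ.filter (fun q : Y × Y => Q q = j)).card : ℂ) := by
      rw [relCard_eq_filter]
    have hXY : (Fintype.card X : ℂ) = (Fintype.card Y : ℂ) * (K : ℂ) := by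
      rw [cardX]; push_cast; ring
    have hK0 : (K : ℂ) ≠ 0 := by
      intro h
      rw [hXY, h, mul_zero] at hX0
      exact hX0 rfl
    rw [innerDist, hermsplit j, hstep, hcast, ← hrelQf, hXY]
    have hQ0 : ((univ.filter (fun q : Y × Y => Q q = j)).card : ℂ) ≠ 0 := by
      rw [← hrelQf]; exact hrelQ
    rw [hrelQf]
    field_simp
end

section
/- Variance theorem: let (X, R, I) be a finite unital regular relation partition with v = #X, and g : X → ℂ be (v, k, λ)-equi-distributed. Then (Σ_x g(x))·conj(Σ_x g(x)) − Σ_x g(x)·conj(g(x)) = λ(v − 1). -/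
open Finset

/-- Variance theorem: for a `(v, k, λ)`-equi-distributed `g` on a finite
unital regular relation partition, `(Σ g)·conj(Σ g) − Σ g·conj g = λ(v − 1)`. -/
theorem variance_theorem {X I : Type*} [Fintype X]
    (R : X × X → I) (hR : Function.Surjective R)
    (i₀ : I) (hu : IsUnital R i₀) (hreg : IsRegularRP R)
    (g : X → ℂ) (k lam : ℂ)
    (hg : IsEquiDist R i₀ g k lam) :
    (∑ x : X, g x) * (starRingEnd ℂ) (∑ x : X, g x)
        - ∑ x : X, g x * (starRingEnd ℂ) (g x)
      = lam * ((Fintype.card X : ℂ) - 1) := by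
  classical
  obtain ⟨p₀, hp₀⟩ := hR i₀
  have hX : Nonempty X := ⟨p₀.1⟩
  have hv : (Fintype.card X : ℂ) ≠ 0 := Nat.cast_ne_zero.mpr Fintype.card_ne_zero
  set S : Finset I := Finset.univ.image R with hS
  have hmem : ∀ p : X × X, R p ∈ S := fun p => Finset.mem_image_of_mem R (Finset.mem_univ p)
  have hi₀S : i₀ ∈ S := hp₀ ▸ hmem p₀
  have hrc : ∀ i, relCard R i = (Finset.univ.filter (fun p : X × X => R p = i)).card := by
    intro i
    rw [relCard, Nat.card_eq_fintype_card, Fintype.card_subtype]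
  have hrc0 : ∀ i ∈ S, (relCard R i : ℂ) ≠ 0 := by
    intro i hi
    obtain ⟨p, -, hp⟩ := Finset.mem_image.mp hi
    rw [Nat.cast_ne_zero, hrc]
    exact Finset.card_ne_zero_of_mem (Finset.mem_filter.mpr ⟨Finset.mem_univ p, hp⟩)
  have htot : ∑ i ∈ S, (relCard R i : ℂ)
      = (Fintype.card X : ℂ) * (Fintype.card X : ℂ) := by
    have h1 := Finset.card_eq_sum_card_fiberwise (f := R) (s := (Finset.univ : Finset (X × X)))
      (t := S) (fun p _ => hmem p)
    have h2 : ∑ i ∈ S, relCard R i = Fintype.card X * Fintype.card X := by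
      simp only [hrc]
      rw [← h1, Finset.card_univ, Fintype.card_prod]
    rw [← Nat.cast_sum, h2]
    push_cast
    ring
  have hrci₀ : (relCard R i₀ : ℂ) = (Fintype.card X : ℂ) := by
    have himg : (Finset.univ.filter (fun p : X × X => R p = i₀))
        = Finset.univ.image (fun x : X => (x, x)) := by
      ext ⟨a, b⟩
      simp only [Finset.mem_filter, Finset.mem_univ, true_and, Finset.mem_image,
        Prod.mk.injEq, hu (a, b)]
      constructor
      · rintro rfl; exact ⟨a, rfl, rfl⟩
      · rintro ⟨x, rfl, rfl⟩; rfl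
    have hinj : Function.Injective (fun x : X => (x, x)) := fun a b h => by
      simpa using h
    rw [hrc, himg, Finset.card_image_of_injective _ hinj, Finset.card_univ]
  set T : I → ℂ := fun i => ∑ p : X × X, if R p = i then g p.1 * (starRingEnd ℂ) (g p.2) else 0
    with hT
  have hherm : ∀ i, herm (adjApply R i g) g = T i := by
    intro i
    show herm (adjApply R i g) g
        = ∑ p : X × X, if R p = i then g p.1 * (starRingEnd ℂ) (g p.2) else 0
    rw [Fintype.sum_prod_type]
    simp only [herm, adjApply, Finset.sum_mul, ite_mul, zero_mul]
    rw [Finset.sum_comm]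
  have hA : (∑ x : X, g x) * (starRingEnd ℂ) (∑ x : X, g x) = ∑ i ∈ S, T i := by
    have h1 : (∑ x : X, g x) * (starRingEnd ℂ) (∑ x : X, g x)
        = ∑ p : X × X, g p.1 * (starRingEnd ℂ) (g p.2) := by
      rw [map_sum, Finset.sum_mul_sum, Fintype.sum_prod_type]
    rw [h1, ← Finset.sum_fiberwise_of_maps_to (fun p (_ : p ∈ Finset.univ) => hmem p)
      (fun p : X × X => g p.1 * (starRingEnd ℂ) (g p.2))]
    exact Finset.sum_congr rfl fun i _ => by
      show _ = ∑ p : X × X, if R p = i then g p.1 * (starRingEnd ℂ) (g p.2) else 0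
      rw [Finset.sum_filter]
  have hTi₀ : T i₀ = ∑ x : X, g x * (starRingEnd ℂ) (g x) := by
    show (∑ p : X × X, if R p = i₀ then g p.1 * (starRingEnd ℂ) (g p.2) else 0) = _
    rw [Fintype.sum_prod_type]
    have he : ∀ a b : X, (R (a, b) = i₀) = (a = b) := fun a b => propext (hu (a, b))
    simp only [he]
    simp [Finset.sum_ite_eq]
  have hTne : ∀ i ∈ S.erase i₀, T i = lam * (relCard R i : ℂ) / (Fintype.card X : ℂ) := by
    intro i hi
    have hne := Finset.ne_of_mem_erase hi
    have hiS := Finset.mem_of_mem_erase hi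
    have hlam := hg.2 i hne
    rw [innerDist, hherm] at hlam
    rw [div_eq_iff (hrc0 i hiS)] at hlam
    rw [eq_div_iff hv]
    linear_combination hlam
  have hsum_erase : ∑ i ∈ S.erase i₀, (relCard R i : ℂ)
      = (Fintype.card X : ℂ) * (Fintype.card X : ℂ) - (Fintype.card X : ℂ) := by
    have h : (relCard R i₀ : ℂ) + ∑ i ∈ S.erase i₀, (relCard R i : ℂ)
        = ∑ i ∈ S, (relCard R i : ℂ) := Finset.add_sum_erase S (fun i => (relCard R i : ℂ)) hi₀S
    rw [htot, hrci₀] at h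
    linear_combination h
  have hB : ∑ i ∈ S, T i
      = T i₀ + lam * ((Fintype.card X : ℂ) * (Fintype.card X : ℂ) - (Fintype.card X : ℂ))
          / (Fintype.card X : ℂ) := by
    rw [← Finset.add_sum_erase S T hi₀S]
    congr 1
    rw [Finset.sum_congr rfl hTne, ← Finset.sum_div, ← Finset.mul_sum, hsum_erase]
  rw [hA, hB, hTi₀]
  field_simp
  ring
end
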